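/- Let K = {f ∈ L¹([0,1], Lebesgue measure; ℝ) : f ≥ 0 almost everywhere}, an ℝ≥0-module under pointwise addition and nonnegative scalar multiplication. Then K has no cone-basis: there is no subset B ⊆ K such that every f ∈ K admits a unique finitely supported function α : B → ℝ≥0 with f = ∑_{b ∈ B} α(b) • b. -/

import Mathlib

open MeasureTheory
open scoped NNReal
open Set
open scoped ENNReal


lemma cut_lemma (ν : Measure ℝ) [IsFiniteMeasure ν] [NullSingletonClass ν] (hν : ν ≠ 0) :
    ∃ c : ℝ, 0 < ν (Iic c) ∧ ν (Iic c) < ν univ := by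
  by_contra h
  push_neg at h
  have hdich : ∀ c : ℝ, ν (Iic c) = 0 ∨ ν (Iic c) = ν univ := by
    intro c
    rcases eq_or_lt_of_le (zero_le (a := ν (Iic c))) with h0 | h0
    · exact Or.inl h0.symm
    · exact Or.inr (le_antisymm (measure_mono (subset_univ _)) (h c h0))
  have huniv : 0 < ν univ := by
    rw [Measure.measure_univ_pos]; exact hν
  set S : Set ℝ := {c | ν (Iic c) ≠ 0} with hS
  have hSmem : ∀ c ∈ S, ν (Iic c) = ν univ := fun c hc => (hdich c).resolve_left hc
  have hSup : ∀ c ∈ S, ∀ d, c ≤ d → d ∈ S := by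
    intro c hc d hcd
    intro h0
    exact hc (measure_mono_null (Iic_subset_Iic.2 hcd) h0)
  have hSne : S.Nonempty := by
    by_contra hemp
    rw [Set.not_nonempty_iff_eq_empty] at hemp
    have h0 : ∀ n : ℕ, ν (Iic (n : ℝ)) = 0 := by
      intro n
      by_contra hn
      exact absurd (show (n:ℝ) ∈ S from hn) (hemp ▸ Set.notMem_empty _)
    have hU : (⋃ n : ℕ, Iic (n:ℝ)) = univ := by
      apply Set.iUnion_eq_univ_iff.2
      intro x; obtain ⟨n, hn⟩ := exists_nat_ge x; exact ⟨n, hn⟩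
    exact huniv.ne' (by rw [← hU]; exact measure_iUnion_null h0)
  -- bddBelow : need some point below all of S? Not true in general!
  -- Fix: if S is not bounded below then ν (Iic c) = ν univ for all c, and
  by_cases hbdd : BddBelow S
  · set c₀ := sInf S with hc₀
    have hIio : ν (Iio c₀) = 0 := by
      have hU : Iio c₀ = ⋃ n : ℕ, Iic (c₀ - 1/(n+1)) := by
        ext x
        simp only [mem_Iio, mem_iUnion, mem_Iic]
        constructor
        · intro hx
          obtain ⟨n, hn⟩ := exists_nat_one_div_lt (sub_pos.2 hx)
          exact ⟨n, by linarith⟩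
        · rintro ⟨n, hn⟩
          have : (0:ℝ) < 1/(n+1) := by positivity
          linarith
      rw [hU]
      apply measure_iUnion_null
      intro n
      by_contra hn
      have : c₀ - 1/(n+1) ∈ S := hn
      have := csInf_le hbdd this
      have hp : (0:ℝ) < 1/(n+1) := by positivity
      rw [← hc₀] at this; linarith
    have hIic : ν (Iic c₀) = ν univ := by
      have hI : Iic c₀ = ⋂ n : ℕ, Iic (c₀ + 1/(n+1)) := by
        ext x
        simp only [mem_Iic, mem_iInter]
        constructor
        · intro hx n
          have : (0:ℝ) < 1/(n+1) := by positivity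
          linarith
        · intro hx
          by_contra hc
          push_neg at hc
          obtain ⟨n, hn⟩ := exists_nat_one_div_lt (sub_pos.2 hc)
          have := hx n
          linarith
      rw [hI]
      have : ∀ n : ℕ, ν (Iic (c₀ + 1/(n+1))) = ν univ := by
        intro n
        apply hSmem
        have hp : (0:ℝ) < 1/(n+1) := by positivity
        have hlt : sInf S < c₀ + 1/(n+1) := by
          rw [← hc₀]; linarith
        obtain ⟨c, hc, hcl⟩ := exists_lt_of_csInf_lt hSne hlt
        exact hSup c hc _ hcl.le
      rw [Directed.measure_iInter]
      · simp only [this, iInf_const]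
      · exact fun n => measurableSet_Iic.nullMeasurableSet
      · intro m n
        rcases le_total m n with hmn | hmn
        · refine ⟨n, ?_, le_refl _⟩
          apply Iic_subset_Iic.2
          have hmn' : (m:ℝ) ≤ n := Nat.cast_le.2 hmn
          have : (1:ℝ)/(n+1) ≤ 1/(m+1) := by
            apply one_div_le_one_div_of_le (by positivity); linarith
          linarith
        · refine ⟨m, le_refl _, ?_⟩
          apply Iic_subset_Iic.2
          have hmn' : (n:ℝ) ≤ m := Nat.cast_le.2 hmn
          have : (1:ℝ)/(m+1) ≤ 1/(n+1) := by
            apply one_div_le_one_div_of_le (by positivity); linarith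
          linarith
      · exact ⟨0, measure_ne_top ν _⟩
    have hsing : ν {c₀} = ν univ := by
      have : Iic c₀ = Iio c₀ ∪ {c₀} := by
        ext x; simp [mem_Iio, le_iff_lt_or_eq]
      rw [this] at hIic
      have hle := measure_union_le (μ := ν) (Iio c₀) {c₀}
      rw [hIic, hIio, zero_add] at hle
      exact le_antisymm (measure_mono (subset_univ _)) hle
    rw [measure_singleton] at hsing
    exact huniv.ne' hsing.symm
  · -- S unbounded below: every real is in S
    have hall : ∀ c : ℝ, c ∈ S := by
      intro c
      rw [not_bddBelow_iff] at hbdd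
      obtain ⟨d, hd, hdc⟩ := hbdd c
      exact hSup d hd c hdc.le
    have hI : (⋂ n : ℕ, Iic (-(n:ℝ)-1)) = ∅ := by
      apply Set.eq_empty_iff_forall_notMem.2
      intro x hx
      simp only [mem_iInter, mem_Iic] at hx
      obtain ⟨n, hn⟩ := exists_nat_ge (-x)
      have := hx n
      linarith
    have : ν (⋂ n : ℕ, Iic (-(n:ℝ)-1)) = ν univ := by
      rw [Directed.measure_iInter]
      · have : ∀ n : ℕ, ν (Iic (-(n:ℝ)-1)) = ν univ := fun n => hSmem _ (hall _)
        simp [this]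
      · exact fun n => measurableSet_Iic.nullMeasurableSet
      · intro m n
        rcases le_total m n with hmn | hmn
        · have hmn' : (m:ℝ) ≤ n := Nat.cast_le.2 hmn
          exact ⟨n, Iic_subset_Iic.2 (by linarith), le_refl _⟩
        · have hmn' : (n:ℝ) ≤ m := Nat.cast_le.2 hmn
          exact ⟨m, le_refl _, Iic_subset_Iic.2 (by linarith)⟩
      · exact ⟨0, measure_ne_top ν _⟩
    rw [hI, measure_empty] at this
    exact huniv.ne' this.symm

lemma split_lemma {μ : Measure ℝ} [IsFiniteMeasure μ] [NullSingletonClass μ]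
    (b : Lp ℝ 1 μ) (hb : b ≠ 0) (hb0 : 0 ≤ b) :
    ∃ g₁ g₂ : Lp ℝ 1 μ, g₁ + g₂ = b ∧ g₁ ≠ 0 ∧ g₂ ≠ 0 ∧ 0 ≤ g₁ ∧ 0 ≤ g₂ ∧
      ∀ s : ℝ, g₁ ≠ s • b := by
  set f : ℝ → ℝ := ⇑b with hf
  set g : ℝ → ℝ≥0∞ := fun x => (‖f x‖₊ : ℝ≥0∞) with hg
  set ν := μ.withDensity g with hν
  have hIuniv : ν univ = ∫⁻ x, g x ∂μ := by
    rw [withDensity_apply _ MeasurableSet.univ, Measure.restrict_univ]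
  have hIe : ν univ = eLpNorm f 1 μ := by
    rw [hIuniv, eLpNorm_one_eq_lintegral_enorm]; rfl
  have hfin : IsFiniteMeasure ν := ⟨by rw [hIe]; exact Lp.eLpNorm_lt_top b⟩
  have hnoat : NoAtoms ν := by
    constructor
    intro x
    rw [hν, withDensity_apply _ (measurableSet_singleton x),
      Measure.restrict_eq_zero.2 (measure_singleton x), lintegral_zero_measure]
  have hνne : ν ≠ 0 := by
    intro h0
    apply hb
    rw [Lp.eq_zero_iff_ae_eq_zero]
    rw [h0] at hIe
    exact (eLpNorm_eq_zero_iff (Lp.aestronglyMeasurable b) one_ne_zero).1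
      (by simpa using hIe.symm)
  obtain ⟨c, hc0, hcI⟩ := cut_lemma ν hνne
  set A : Set ℝ := Iic c with hA
  have hAm : MeasurableSet A := measurableSet_Iic
  have m₁ : MemLp (A.indicator f) 1 μ := (Lp.memLp b).indicator hAm
  have m₂ : MemLp (Aᶜ.indicator f) 1 μ := (Lp.memLp b).indicator hAm.compl
  refine ⟨m₁.toLp _, m₂.toLp _, ?_, ?_, ?_, ?_, ?_, ?_⟩
  -- eLpNorm computations first as `have`s? do inline
  case _ => -- sum
    rw [← MemLp.toLp_add]
    apply Lp.ext
    refine (MemLp.coeFn_toLp _).trans ?_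
    rw [Set.indicator_self_add_compl A f]
  case _ => -- g₁ ≠ 0
    intro h0
    rw [Lp.eq_zero_iff_ae_eq_zero] at h0
    have := (m₁.coeFn_toLp.symm.trans h0 : A.indicator f =ᵐ[μ] 0)
    have hz : eLpNorm (A.indicator f) 1 μ = 0 := by
      rw [eLpNorm_congr_ae this, eLpNorm_zero]
    rw [eLpNorm_one_eq_lintegral_enorm] at hz
    have : ∫⁻ x in A, g x ∂μ = 0 := by
      rw [← lintegral_indicator hAm]
      rw [← hz]
      apply lintegral_congr
      intro x
      by_cases hx : x ∈ A <;>
        simp [hg, Set.indicator_of_mem, Set.indicator_of_notMem, hx, enorm_eq_nnnorm]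
    rw [← withDensity_apply _ hAm, ← hν] at this
    exact hc0.ne' this
  case _ => -- g₂ ≠ 0
    intro h0
    rw [Lp.eq_zero_iff_ae_eq_zero] at h0
    have := (m₂.coeFn_toLp.symm.trans h0 : Aᶜ.indicator f =ᵐ[μ] 0)
    have hz : eLpNorm (Aᶜ.indicator f) 1 μ = 0 := by
      rw [eLpNorm_congr_ae this, eLpNorm_zero]
    rw [eLpNorm_one_eq_lintegral_enorm] at hz
    have h2 : ∫⁻ x in Aᶜ, g x ∂μ = 0 := by
      rw [← lintegral_indicator hAm.compl, ← hz]
      apply lintegral_congr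
      intro x
      by_cases hx : x ∈ Aᶜ <;>
        simp [hg, Set.indicator_of_mem, Set.indicator_of_notMem, hx, enorm_eq_nnnorm]
    have := lintegral_add_compl g hAm (μ := μ)
    rw [h2, add_zero, ← withDensity_apply _ hAm, ← hν, ← hIuniv] at this
    exact hcI.ne this
  case _ => -- 0 ≤ g₁
    rw [← Lp.coeFn_nonneg]
    have hfb : (0:ℝ→ℝ) ≤ᵐ[μ] f := (Lp.coeFn_nonneg b).2 hb0
    filter_upwards [m₁.coeFn_toLp, hfb] with x hx hx0
    rw [hx]
    exact Set.indicator_nonneg (fun y _ => hx0) x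
  case _ => -- 0 ≤ g₂
    rw [← Lp.coeFn_nonneg]
    have hfb : (0:ℝ→ℝ) ≤ᵐ[μ] f := (Lp.coeFn_nonneg b).2 hb0
    filter_upwards [m₂.coeFn_toLp, hfb] with x hx hx0
    rw [hx]
    exact Set.indicator_nonneg (fun y _ => hx0) x
  case _ => -- not scalar mult
    intro s hs
    rcases eq_or_ne s 0 with rfl | hsne
    · rw [zero_smul] at hs
      -- then g₁ = 0, contradict g₁ ≠ 0 — but we are in separate case; rederive
      have h0 : A.indicator f =ᵐ[μ] 0 := by
        refine m₁.coeFn_toLp.symm.trans ?_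
        rw [hs]; exact Lp.coeFn_zero _ _ _
      have hz : eLpNorm (A.indicator f) 1 μ = 0 := by
        rw [eLpNorm_congr_ae h0, eLpNorm_zero]
      rw [eLpNorm_one_eq_lintegral_enorm] at hz
      have : ∫⁻ x in A, g x ∂μ = 0 := by
        rw [← lintegral_indicator hAm, ← hz]
        apply lintegral_congr
        intro x
        by_cases hx : x ∈ A <;>
          simp [hg, Set.indicator_of_mem, Set.indicator_of_notMem, hx, enorm_eq_nnnorm]
      rw [← withDensity_apply _ hAm, ← hν] at this
      exact hc0.ne' this
    · -- s ≠ 0 : then f vanishes a.e. off A, so g₂ = 0-like: compute ν(Aᶜ)=0, so ν univ = ν A, contra hcI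
      have key : A.indicator f =ᵐ[μ] fun x => s * f x := by
        have h1 := m₁.coeFn_toLp
        rw [hs] at h1
        exact h1.symm.trans ((Lp.coeFn_smul s b).trans (by rfl))
      have h2 : Aᶜ.indicator f =ᵐ[μ] 0 := by
        filter_upwards [key] with x hx
        by_cases hxA : x ∈ A
        · simp [Set.indicator_of_notMem, hxA]
        · have : A.indicator f x = 0 := Set.indicator_of_notMem hxA f
          rw [this] at hx
          have hfx : f x = 0 := by
            rcases mul_eq_zero.1 hx.symm with h | h
            · exact absurd h hsne
            · exact h
          simp [Set.indicator_of_mem, hxA, hfx]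
      have hz : eLpNorm (Aᶜ.indicator f) 1 μ = 0 := by
        rw [eLpNorm_congr_ae h2, eLpNorm_zero]
      rw [eLpNorm_one_eq_lintegral_enorm] at hz
      have h2' : ∫⁻ x in Aᶜ, g x ∂μ = 0 := by
        rw [← lintegral_indicator hAm.compl, ← hz]
        apply lintegral_congr
        intro x
        by_cases hx : x ∈ Aᶜ <;>
          simp [hg, Set.indicator_of_mem, Set.indicator_of_notMem, hx, enorm_eq_nnnorm]
      have := lintegral_add_compl g hAm (μ := μ)
      rw [h2', add_zero, ← withDensity_apply _ hAm, ← hν, ← hIuniv] at this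
      exact hcI.ne this

local notation "μ01" => Measure.restrict (volume : Measure ℝ) (Set.Icc (0 : ℝ) 1)

/-- The cone of nonnegative functions in `L¹([0,1])` has no cone-basis. -/
theorem stmt13 :
    ¬ ∃ B : Set (Lp ℝ 1 ((volume : Measure ℝ).restrict (Set.Icc (0 : ℝ) 1))),
      (∀ b ∈ B, 0 ≤ b) ∧
      ∀ f : Lp ℝ 1 ((volume : Measure ℝ).restrict (Set.Icc (0 : ℝ) 1)), 0 ≤ f →
        ∃! α : B →₀ ℝ≥0,
          f = α.sum fun b c =>
            (c : ℝ) • (b : Lp ℝ 1 ((volume : Measure ℝ).restrict (Set.Icc (0 : ℝ) 1))) := by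
  rintro ⟨B, hB, hrep⟩
  set F : ↥B → ℝ≥0 → Lp ℝ 1 μ01 := fun b c => (c : ℝ) • (b : Lp ℝ 1 μ01) with hF
  have hF0 : ∀ b : ↥B, F b 0 = 0 := fun b => by simp [hF]
  have hFadd : ∀ (b : ↥B) (c₁ c₂ : ℝ≥0), F b (c₁ + c₂) = F b c₁ + F b c₂ := by
    intro b c₁ c₂; simp [hF, NNReal.coe_add, add_smul]
  have hvol1 : μ01 (Set.Icc (0:ℝ) 1) = 1 := by
    rw [Measure.restrict_apply_self]
    simp [Real.volume_Icc]
  have hvol : μ01 (Set.Icc (0:ℝ) 1) ≠ ⊤ := by rw [hvol1]; exact ENNReal.one_ne_top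
  set P : Lp ℝ 1 μ01 := indicatorConstLp 1 measurableSet_Icc hvol (1:ℝ) with hP
  have hPpos : 0 ≤ P := by
    rw [← Lp.coeFn_nonneg]
    filter_upwards [indicatorConstLp_coeFn (μ := μ01) (p := 1) (hs := measurableSet_Icc)
      (hμs := hvol) (c := (1:ℝ))] with x hx
    rw [hP, hx]
    exact Set.indicator_nonneg (fun y _ => zero_le_one) x
  have hPne : P ≠ 0 := by
    intro h0
    have hnorm : ‖P‖ = ‖(1:ℝ)‖ * (μ01 (Set.Icc (0:ℝ) 1)).toReal ^ (1 / (1:ℝ≥0∞).toReal) := by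
      rw [hP]
      exact norm_indicatorConstLp one_ne_zero ENNReal.one_ne_top
    rw [h0, norm_zero, hvol1] at hnorm
    simp at hnorm
  obtain ⟨α, hα, -⟩ := hrep P hPpos
  have hαne : α ≠ 0 := by
    rintro rfl
    rw [Finsupp.sum_zero_index] at hα
    exact hPne hα
  obtain ⟨b₀, hb₀⟩ := Finsupp.support_nonempty_iff.2 hαne
  clear hb₀ hα hαne hPne hPpos
  have hb₀pos : 0 ≤ (b₀ : Lp ℝ 1 μ01) := hB _ b₀.2
  have hb₀ne : (b₀ : Lp ℝ 1 μ01) ≠ 0 := by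
    intro h0
    obtain ⟨β, hβ, huniq⟩ := hrep 0 le_rfl
    have h1 : (0 : Lp ℝ 1 μ01) = (Finsupp.single b₀ 1).sum F := by
      rw [Finsupp.sum_single_index (hF0 b₀)]
      simp [hF, h0]
    have h2 : (0 : Lp ℝ 1 μ01) = (0 : ↥B →₀ ℝ≥0).sum F := by
      rw [Finsupp.sum_zero_index]
    have := (huniq _ h1).trans (huniq _ h2).symm
    have := DFunLike.congr_fun this b₀
    simp at this
  obtain ⟨g₁, g₂, hsum, hg₁ne, hg₂ne, hg₁pos, hg₂pos, hnsmul⟩ :=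
    split_lemma (b₀ : Lp ℝ 1 μ01) hb₀ne hb₀pos
  obtain ⟨β₁, hβ₁, -⟩ := hrep g₁ hg₁pos
  obtain ⟨β₂, hβ₂, -⟩ := hrep g₂ hg₂pos
  obtain ⟨γ, hγ, huniq⟩ := hrep (b₀ : Lp ℝ 1 μ01) hb₀pos
  have hr1 : (b₀ : Lp ℝ 1 μ01) = (β₁ + β₂).sum F := by
    rw [Finsupp.sum_add_index' hF0 hFadd, ← hβ₁, ← hβ₂, hsum]
  have hr2 : (b₀ : Lp ℝ 1 μ01) = (Finsupp.single b₀ 1).sum F := by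
    rw [Finsupp.sum_single_index (hF0 b₀)]
    simp [hF]
  have heq : β₁ + β₂ = Finsupp.single b₀ 1 := (huniq _ hr1).trans (huniq _ hr2).symm
  have hβ₁single : β₁ = Finsupp.single b₀ (β₁ b₀) := by
    ext b
    rcases eq_or_ne b b₀ with rfl | hbne
    · simp
    · have hb := DFunLike.congr_fun heq b
      rw [Finsupp.add_apply, Finsupp.single_apply_eq_zero.2 (fun h => absurd h hbne)] at hb
      have h0 : β₁ b = 0 := (add_eq_zero.1 hb).1
      rw [h0, Finsupp.single_apply_eq_zero.2 (fun h => absurd h hbne)]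
  have hfinal : g₁ = ((β₁ b₀ : ℝ≥0) : ℝ) • (b₀ : Lp ℝ 1 μ01) := by
    rw [hβ₁, hβ₁single, Finsupp.sum_single_index (hF0 b₀)]
    simp [hF]
  exact hnsmul _ hfinal
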